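/- Let X be a regular Hausdorff feebly compact space in which every point is a Gδ (an intersection of countably many open sets). Then X is first countable. -/

import Mathlib

/-- A space is *feebly compact* if every countable open cover has a finite
subfamily whose union is dense. -/
def FeeblyCompact (X : Type*) [TopologicalSpace X] : Prop :=
  ∀ C : Set (Set X), C.Countable → (∀ U ∈ C, IsOpen U) → ⋃₀ C = Set.univ →
    ∃ F : Finset (Set X), ↑F ⊆ C ∧ Dense (⋃₀ (F : Set (Set X)))

/-- In a feebly compact space, a decreasing sequence of nonempty open sets has
nonempty intersection of closures. -/
lemma feebly_chain_aux {X : Type*} [TopologicalSpace X] (hfc : FeeblyCompact X)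
    (W : ℕ → Set X) (hop : ∀ n, IsOpen (W n)) (hne : ∀ n, (W n).Nonempty)
    (hmono : ∀ n, W (n + 1) ⊆ W n) : (⋂ n, closure (W n)).Nonempty := by
  by_contra h
  rw [Set.not_nonempty_iff_eq_empty] at h
  have hanti : Antitone W := antitone_nat_of_succ_le hmono
  set g : ℕ → Set X := fun n => (closure (W n))ᶜ with hg
  have hcover : ⋃₀ Set.range g = Set.univ := by
    ext y
    simp only [Set.sUnion_range, Set.mem_iUnion, Set.mem_univ, iff_true, hg, Set.mem_compl_iff]
    by_contra hy
    push_neg at hy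
    have : y ∈ ⋂ n, closure (W n) := Set.mem_iInter.2 hy
    rw [h] at this
    exact this
  obtain ⟨F, hFsub, hdense⟩ := hfc (Set.range g) (Set.countable_range g)
    (by rintro U ⟨n, rfl⟩; exact isClosed_closure.isOpen_compl) hcover
  classical
  set idx : Set X → ℕ := fun U => sInf {n | g n = U} with hidx
  set N : ℕ := F.sup idx with hN
  obtain ⟨y, hyF, hyW⟩ := hdense.exists_mem_open (hop N) (hne N)
  obtain ⟨U, hUF, hyU⟩ := hyF
  obtain ⟨n, hn⟩ := hFsub hUF
  have hne' : {m | g m = U}.Nonempty := ⟨n, hn⟩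
  have hidxU : g (idx U) = U := Nat.sInf_mem hne'
  have hle : idx U ≤ N := Finset.le_sup hUF
  have hWsub : W N ⊆ W (idx U) := hanti hle
  rw [← hidxU] at hyU
  exact hyU (subset_closure (hWsub hyW))

open scoped Classical in
/-- Auxiliary recursive shrinking sequence. -/
noncomputable def shrinkSeq {X : Type*} [TopologicalSpace X] (x : X) (f : ℕ → Set X)
    (key : ∀ O : Set X, IsOpen O → x ∈ O → Set X) : ℕ → Set X
  | 0 => if h : IsOpen (f 0) ∧ x ∈ f 0 then key (f 0) h.1 h.2 else ∅
  | n + 1 =>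
    let V := shrinkSeq x f key n
    if h : IsOpen (f (n + 1) ∩ V) ∧ x ∈ f (n + 1) ∩ V then
      key (f (n + 1) ∩ V) h.1 h.2 else ∅

theorem feeblyCompact_gdelta_points_firstCountable {X : Type*} [TopologicalSpace X]
    [T2Space X] [RegularSpace X] (hfc : FeeblyCompact X)
    (hGδ : ∀ x : X, ∃ f : ℕ → Set X, (∀ n, IsOpen (f n)) ∧ (⋂ n, f n) = {x}) :
    FirstCountableTopology X := by
  classical
  refine ⟨fun x => ?_⟩
  obtain ⟨f, hfop, hfx⟩ := hGδ x
  have hxf : ∀ n, x ∈ f n := fun n => by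
    have : x ∈ ⋂ n, f n := by rw [hfx]; exact rfl
    exact Set.mem_iInter.1 this n
  -- regularity: shrink any open neighborhood
  have key0 : ∀ O : Set X, IsOpen O → x ∈ O →
      ∃ V : Set X, IsOpen V ∧ x ∈ V ∧ closure V ⊆ O := by
    intro O hO hxO
    obtain ⟨t, ht, htc, hts⟩ := exists_mem_nhds_isClosed_subset (hO.mem_nhds hxO)
    refine ⟨interior t, isOpen_interior, mem_interior_iff_mem_nhds.2 ht, ?_⟩
    calc closure (interior t) ⊆ closure t := closure_mono interior_subset
      _ = t := htc.closure_eq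
      _ ⊆ O := hts
  set key : ∀ O : Set X, IsOpen O → x ∈ O → Set X :=
    fun O hO hxO => Classical.choose (key0 O hO hxO) with hkey
  have keyspec : ∀ (O : Set X) (hO : IsOpen O) (hxO : x ∈ O),
      IsOpen (key O hO hxO) ∧ x ∈ key O hO hxO ∧ closure (key O hO hxO) ⊆ O :=
    fun O hO hxO => Classical.choose_spec (key0 O hO hxO)
  set V : ℕ → Set X := shrinkSeq x f key with hV
  -- basic properties of V by induction
  have hVbase : ∀ n, IsOpen (V n) ∧ x ∈ V n ∧ closure (V n) ⊆ f n := by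
    intro n
    induction n with
    | zero =>
      have h0 : IsOpen (f 0) ∧ x ∈ f 0 := ⟨hfop 0, hxf 0⟩
      have : V 0 = key (f 0) h0.1 h0.2 := by
        simp only [hV, shrinkSeq, dif_pos h0]
      rw [this]
      exact keyspec _ h0.1 h0.2
    | succ n ih =>
      have hcond : IsOpen (f (n + 1) ∩ V n) ∧ x ∈ f (n + 1) ∩ V n :=
        ⟨(hfop (n + 1)).inter ih.1, ⟨hxf (n + 1), ih.2.1⟩⟩
      have hVs : V (n + 1) = key (f (n + 1) ∩ V n) hcond.1 hcond.2 := by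
        simp only [hV, shrinkSeq]
        exact dif_pos hcond
      rw [hVs]
      obtain ⟨h1, h2, h3⟩ := keyspec _ hcond.1 hcond.2
      exact ⟨h1, h2, h3.trans (Set.inter_subset_left)⟩
  have hVlink : ∀ n, closure (V (n + 1)) ⊆ V n := by
    intro n
    have hcond : IsOpen (f (n + 1) ∩ V n) ∧ x ∈ f (n + 1) ∩ V n :=
      ⟨(hfop (n + 1)).inter (hVbase n).1, ⟨hxf (n + 1), (hVbase n).2.1⟩⟩
    have hVs : V (n + 1) = key (f (n + 1) ∩ V n) hcond.1 hcond.2 := by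
      simp only [hV, shrinkSeq]
      exact dif_pos hcond
    rw [hVs]
    exact ((keyspec _ hcond.1 hcond.2).2.2).trans Set.inter_subset_right
  have hVmono : ∀ n, V (n + 1) ⊆ V n := fun n =>
    subset_closure.trans (hVlink n)
  have hVanti : Antitone V := antitone_nat_of_succ_le hVmono
  -- show (V n) is a basis of 𝓝 x
  have hbasis : (nhds x).HasBasis (fun _ : ℕ => True) V := by
    constructor
    intro S
    constructor
    · intro hS
      by_contra hcon
      push_neg at hcon
      have hcon' : ∀ n, ¬ V n ⊆ S := fun n => hcon n trivial
      -- get a closed neighborhood inside S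
      obtain ⟨t, ht, htc, hts⟩ := exists_mem_nhds_isClosed_subset hS
      set V' : Set X := interior t with hV'
      have hxV' : x ∈ V' := mem_interior_iff_mem_nhds.2 ht
      have hclV' : closure V' ⊆ S := by
        calc closure V' ⊆ closure t := closure_mono interior_subset
          _ = t := htc.closure_eq
          _ ⊆ S := hts
      set W : ℕ → Set X := fun n => V n ∩ (closure V')ᶜ with hW
      have hWop : ∀ n, IsOpen (W n) := fun n =>
        (hVbase n).1.inter isClosed_closure.isOpen_compl
      have hWne : ∀ n, (W n).Nonempty := by
        intro n
        rw [Set.inter_compl_nonempty_iff]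
        intro hsub
        exact hcon' n (hsub.trans hclV')
      have hWmono : ∀ n, W (n + 1) ⊆ W n := fun n =>
        Set.inter_subset_inter_left _ (hVmono n)
      obtain ⟨z, hz⟩ := feebly_chain_aux hfc W hWop hWne hWmono
      have hz' : ∀ n, z ∈ closure (W n) := Set.mem_iInter.1 hz
      have hzf : ∀ n, z ∈ f n := fun n =>
        (hVbase n).2.2 (closure_mono (Set.inter_subset_left) (hz' n))
      have hzx : z = x := by
        have : z ∈ ⋂ n, f n := Set.mem_iInter.2 hzf
        rw [hfx] at this
        exact this
      have hznot : z ∉ V' := by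
        have h1 : z ∈ closure ((closure V')ᶜ) :=
          closure_mono (Set.inter_subset_right) (hz' 0)
        rw [closure_compl] at h1
        have hsub : V' ⊆ interior (closure V') :=
          (isOpen_interior : IsOpen V').subset_interior_iff.mpr subset_closure
        exact fun hzV' => h1 (hsub hzV')
      rw [hzx] at hznot
      exact hznot hxV'
    · rintro ⟨n, -, hsub⟩
      exact Filter.mem_of_superset ((hVbase n).1.mem_nhds (hVbase n).2.1) hsub
  exact hbasis.isCountablyGenerated
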